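/- Let V be a real inner product space of dimension at least 2 and let a, b be unit vectors in V. Then the supremum over unit vectors m of ( angle(m, a) − angle(m, b) ) equals angle(a, b), where angle denotes the angle between nonzero vectors (the spherical distance on the unit sphere); the supremum is attained at m = −a. Consequently, Barbilian's metrization procedure with K = J the unit sphere and influence f(M,A) = exp( angle(M,A) / 2 ) yields the spherical distance: ln( sup_m e^{(angle(m,a) − angle(m,b))/2} / inf_m e^{(angle(m,a) − angle(m,b))/2} ) = angle(a,b). -/

import Mathlib

open InnerProductGeometry Real in
private lemma angle_tri_unit {V : Type*} [NormedAddCommGroup V]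
    [InnerProductSpace ℝ V] (x y z : V) (hx : ‖x‖ = 1) (hy : ‖y‖ = 1) (hz : ‖z‖ = 1) :
    angle x z ≤ angle x y + angle y z := by
  by_cases hπ : π ≤ angle x y + angle y z
  · exact le_trans (angle_le_pi x z) hπ
  push_neg at hπ
  set cx := (inner ℝ x y : ℝ) with hcx
  set cz := (inner ℝ z y : ℝ) with hcz
  have hyx : (inner ℝ y x : ℝ) = cx := by rw [real_inner_comm]
  have hyz : (inner ℝ y z : ℝ) = cz := by rw [real_inner_comm]
  have cosxy : Real.cos (angle x y) = cx := by rw [cos_angle, hx, hy]; simp [hcx]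
  have cosyz : Real.cos (angle y z) = cz := by
    rw [cos_angle, hy, hz, real_inner_comm]; simp [hcz]
  have cosxz : Real.cos (angle x z) = (inner ℝ x z : ℝ) := by rw [cos_angle, hx, hz]; simp
  have hx2 : ‖x - cx • y‖ ^ 2 = 1 - cx ^ 2 := by
    rw [← real_inner_self_eq_norm_sq]
    simp only [inner_sub_left, inner_sub_right, real_inner_smul_left, real_inner_smul_right,
      real_inner_self_eq_norm_sq, hx, hy]
    rw [hyx, norm_smul, hy, Real.norm_eq_abs, mul_one, sq_abs]
    ring
  have hz2 : ‖z - cz • y‖ ^ 2 = 1 - cz ^ 2 := by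
    rw [← real_inner_self_eq_norm_sq]
    simp only [inner_sub_left, inner_sub_right, real_inner_smul_left, real_inner_smul_right,
      real_inner_self_eq_norm_sq, hz, hy]
    rw [hyz, norm_smul, hy, Real.norm_eq_abs, mul_one, sq_abs]
    ring
  have hinner : (inner ℝ (x - cx • y) (z - cz • y) : ℝ) = (inner ℝ x z : ℝ) - cx * cz := by
    simp only [inner_sub_left, inner_sub_right, real_inner_smul_left, real_inner_smul_right,
      real_inner_self_eq_norm_sq, hy]
    rw [hyz, ← hcx]
    ring
  have hCS : -(‖x - cx • y‖ * ‖z - cz • y‖) ≤ (inner ℝ x z : ℝ) - cx * cz := by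
    have h := abs_real_inner_le_norm (x - cx • y) (z - cz • y)
    rw [hinner] at h
    linarith [neg_abs_le ((inner ℝ x z : ℝ) - cx * cz)]
  have hsinx : Real.sin (angle x y) = ‖x - cx • y‖ := by
    rw [Real.sin_eq_sqrt_one_sub_cos_sq (angle_nonneg x y) (angle_le_pi x y), cosxy,
      ← hx2, Real.sqrt_sq (norm_nonneg _)]
  have hsinz : Real.sin (angle y z) = ‖z - cz • y‖ := by
    rw [Real.sin_eq_sqrt_one_sub_cos_sq (angle_nonneg y z) (angle_le_pi y z), cosyz,
      ← hz2, Real.sqrt_sq (norm_nonneg _)]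
  have hcos : Real.cos (angle x y + angle y z) ≤ Real.cos (angle x z) := by
    rw [Real.cos_add, cosxy, cosyz, cosxz, hsinx, hsinz]
    linarith
  by_contra hlt
  push_neg at hlt
  have := Real.strictAntiOn_cos
    ⟨add_nonneg (angle_nonneg x y) (angle_nonneg y z), le_of_lt hπ⟩
    ⟨angle_nonneg x z, angle_le_pi x z⟩ hlt
  linarith

open InnerProductGeometry in
/-- On the unit sphere of a real inner product space of dimension at least 2, for unit
vectors `a, b` the supremum over unit vectors `m` of `angle(m,a) - angle(m,b)` equals
`angle(a,b)` and is attained at `m = -a`; consequently Barbilian's procedure with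
influence `f(M,A) = exp(angle(M,A)/2)` yields the spherical distance. -/
theorem barbilian_spherical {V : Type*} [NormedAddCommGroup V]
    [InnerProductSpace ℝ V] (hdim : 2 ≤ Module.rank ℝ V)
    (a b : V) (ha : ‖a‖ = 1) (hb : ‖b‖ = 1) :
    IsGreatest ((fun m : V => angle m a - angle m b) '' {m : V | ‖m‖ = 1})
      (angle a b) ∧
    angle (-a) a - angle (-a) b = angle a b ∧
    Real.log
      (sSup ((fun m : V => Real.exp (angle m a / 2) / Real.exp (angle m b / 2)) ''
          {m : V | ‖m‖ = 1}) /
        sInf ((fun m : V => Real.exp (angle m a / 2) / Real.exp (angle m b / 2)) ''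
          {m : V | ‖m‖ = 1})) = angle a b := by
  have ha0 : a ≠ 0 := by intro h; rw [h, norm_zero] at ha; norm_num at ha
  have hb0 : b ≠ 0 := by intro h; rw [h, norm_zero] at hb; norm_num at hb
  have hna : ‖-a‖ = 1 := by rw [norm_neg]; exact ha
  have hnb : ‖-b‖ = 1 := by rw [norm_neg]; exact hb
  have hkey : angle (-a) a - angle (-a) b = angle a b := by
    rw [angle_neg_left, angle_neg_left, angle_self ha0, angle_comm a b]; ring
  have hkey' : angle (-b) a - angle (-b) b = -(angle a b) := by
    rw [angle_neg_left, angle_neg_left, angle_self hb0, angle_comm b a]; ring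
  have hub : ∀ m : V, ‖m‖ = 1 → angle m a - angle m b ≤ angle a b := by
    intro m hm
    have := angle_tri_unit m b a hm hb ha
    rw [angle_comm b a] at this
    linarith
  have hlb : ∀ m : V, ‖m‖ = 1 → -(angle a b) ≤ angle m a - angle m b := by
    intro m hm
    have := angle_tri_unit m a b hm ha hb
    linarith
  have hgreat : IsGreatest ((fun m : V => angle m a - angle m b) '' {m : V | ‖m‖ = 1})
      (angle a b) := by
    constructor
    · exact ⟨-a, hna, hkey⟩
    · rintro v ⟨m, hm, rfl⟩
      exact hub m hm
  refine ⟨hgreat, hkey, ?_⟩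
  have hfun : ∀ m : V, Real.exp (angle m a / 2) / Real.exp (angle m b / 2)
      = Real.exp ((angle m a - angle m b) / 2) := by
    intro m; rw [← Real.exp_sub]; ring_nf
  have hsup : sSup ((fun m : V => Real.exp (angle m a / 2) / Real.exp (angle m b / 2)) ''
      {m : V | ‖m‖ = 1}) = Real.exp (angle a b / 2) := by
    apply IsGreatest.csSup_eq
    constructor
    · exact ⟨-a, hna, by dsimp only; rw [hfun, hkey]⟩
    · rintro v ⟨m, hm, rfl⟩
      dsimp only
      rw [hfun]
      exact Real.exp_le_exp.2 (by linarith [hub m hm])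
  have hinf : sInf ((fun m : V => Real.exp (angle m a / 2) / Real.exp (angle m b / 2)) ''
      {m : V | ‖m‖ = 1}) = Real.exp (-(angle a b) / 2) := by
    apply IsLeast.csInf_eq
    constructor
    · exact ⟨-b, hnb, by dsimp only; rw [hfun, hkey']⟩
    · rintro v ⟨m, hm, rfl⟩
      dsimp only
      rw [hfun]
      exact Real.exp_le_exp.2 (by linarith [hlb m hm])
  rw [hsup, hinf, ← Real.exp_sub, Real.log_exp]
  ring
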